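/- Let k be a positive integer. There exists a constant C_k > 0 (depending only on k) such that the following holds. Let a < b be real numbers, let f₁, …, f_k be continuous monotonic real-valued functions on [a,b] with |f_j(t)| ≤ A_j for all t ∈ [a,b] (j = 1, …, k), and let g be a real-valued function on [a,b] with a continuous monotonic derivative satisfying |g'(t)| ≥ Δ > 0 for all t ∈ [a,b]. Then |∫_a^b f₁(t) ⋯ f_k(t) e^{2πi g(t)} dt| ≤ C_k A₁ ⋯ A_k / Δ. -/

import Mathlib

open Real MeasureTheory

lemma upper_int {c d K : ℝ} (hK : 0 ≤ K) {φ : ℝ → ℂ}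
    (hint : ∀ x, c ≤ x → x ≤ d → ‖∫ t in x..d, φ t‖ ≤ K)
    {U : Set ℝ} (hU : ∀ ⦃s t : ℝ⦄, s ≤ t → s ∈ U → t ∈ U) :
    ‖∫ t in Set.Ioc c d ∩ U, φ t‖ ≤ K := by
  set S := Set.Ioc c d ∩ U with hSdef
  rcases Set.eq_empty_or_nonempty S with hS | hS
  · simp [hS, hK]
  · set u := sInf S with hu
    have hbdd : BddBelow S := ⟨c, fun x hx => le_of_lt hx.1.1⟩
    have hcu : c ≤ u := le_csInf hS fun x hx => hx.1.1.le
    obtain ⟨s₀, hs₀⟩ := id hS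
    have hud : u ≤ d := le_trans (csInf_le hbdd hs₀) hs₀.1.2
    have hsub1 : Set.Ioc u d ⊆ S := by
      intro t ht
      obtain ⟨s, hsS, hst⟩ := exists_lt_of_csInf_lt hS ht.1
      exact ⟨⟨lt_of_lt_of_le hsS.1.1 hst.le, ht.2⟩, hU hst.le hsS.2⟩
    have hsub2 : S ⊆ Set.Icc u d := fun x hx => ⟨csInf_le hbdd hx, hx.1.2⟩
    have hae : S =ᵐ[volume] Set.Ioc u d := by
      rw [Filter.eventuallyEq_set]
      have h1 : {x | ¬(x ∈ S ↔ x ∈ Set.Ioc u d)} ⊆ {u} := by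
        intro x hx
        simp only [Set.mem_setOf_eq, iff_iff_implies_and_implies, not_and_or] at hx
        rcases hx with hx | hx
        · push_neg at hx
          obtain ⟨hxS, hxn⟩ := hx
          have := hsub2 hxS
          simp only [Set.mem_Ioc, not_and_or, not_lt, not_le] at hxn
          rcases hxn with h | h
          · exact le_antisymm h this.1
          · exact absurd this.2 (not_le.2 h)
        · push_neg at hx
          exact absurd (hsub1 hx.1) hx.2
      have : volume {x | ¬(x ∈ S ↔ x ∈ Set.Ioc u d)} = 0 :=
        measure_mono_null h1 (Real.volume_singleton)
      filter_upwards [MeasureTheory.measure_eq_zero_iff_ae_notMem.mp this] with x hx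
      simp only [Set.mem_setOf_eq, not_not] at hx
      exact hx
    rw [setIntegral_congr_set hae, ← intervalIntegral.integral_of_le hud]
    exact hint u hcu hud

lemma layer_core {c d M K : ℝ} (hcd : c ≤ d) (hM : 0 ≤ M) (hK : 0 ≤ K)
    {h : ℝ → ℝ} (hmono : Monotone h) (hbd : ∀ t, |h t| ≤ M)
    {φ : ℝ → ℂ} (hφ : Continuous φ)
    (hint : ∀ x y, c ≤ x → x ≤ y → y ≤ d → ‖∫ t in x..y, φ t‖ ≤ K) :
    ‖∫ t in c..d, (h t : ℂ) * φ t‖ ≤ 3 * M * K := by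
  set μ := volume.restrict (Set.Ioc c d) with hμ
  set ν := volume.restrict (Set.Ioc (-M) M) with hν
  haveI : IsFiniteMeasure ν := ⟨by rw [hν, Measure.restrict_apply_univ]; exact measure_Ioc_lt_top⟩
  have hνuniv : (ν Set.univ).toReal = 2 * M := by
    rw [hν, Measure.restrict_apply_univ, Real.volume_Ioc, ENNReal.toReal_ofReal (by linarith)]
    ring
  set W : Set (ℝ × ℝ) := {p | p.2 < h p.1} with hW
  have hWm : MeasurableSet W := by
    have : W = (fun p : ℝ × ℝ => h p.1 - p.2) ⁻¹' (Set.Ioi 0) := by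
      ext p; simp [hW, sub_pos]
    rw [this]
    exact ((hmono.measurable.comp measurable_fst).sub measurable_snd) measurableSet_Ioi
  set G : ℝ × ℝ → ℂ := W.indicator (fun p => φ p.1) with hG
  have hGsm : StronglyMeasurable G := ((hφ.comp continuous_fst).stronglyMeasurable).indicator hWm
  have hfib : ∀ x, (fun y => G (x, y)) = (Set.Iio (h x)).indicator (fun _ => φ x) := by
    intro x; funext y
    simp only [hG, hW, Set.indicator_apply, Set.mem_setOf_eq, Set.mem_Iio]
  have hconst : ∀ x : ℝ, Integrable (fun _ : ℝ => φ x) ν :=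
    fun x => integrableOn_const measure_Ioc_lt_top.ne
  have hfibint : ∀ x, Integrable (fun y => G (x, y)) ν := by
    intro x; rw [hfib x]; exact (hconst x).indicator measurableSet_Iio
  have hGint : Integrable G (μ.prod ν) := by
    rw [integrable_prod_iff hGsm.aestronglyMeasurable]
    refine ⟨Filter.Eventually.of_forall hfibint, ?_⟩
    refine Integrable.mono' (g := fun x => 2 * M * ‖φ x‖)
      ((continuous_const.mul hφ.norm).integrableOn_Ioc)
      ((hGsm.norm.integral_prod_right').aestronglyMeasurable)
      (Filter.Eventually.of_forall fun x => ?_)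
    rw [Real.norm_eq_abs, abs_of_nonneg (integral_nonneg (fun y => norm_nonneg _))]
    calc ∫ y, ‖G (x, y)‖ ∂ν ≤ ∫ _, ‖φ x‖ ∂ν := by
          refine integral_mono (hfibint x).norm (hconst x).norm (fun y => ?_)
          have := hfib x
          simp only [this]
          exact norm_indicator_le_norm_self _ _
      _ = 2 * M * ‖φ x‖ := by rw [integral_const, show ν.real Set.univ = 2 * M from hνuniv, smul_eq_mul]
  -- inner y-integral
  have hinner : ∀ x, ∫ y, G (x, y) ∂ν = ((h x + M : ℝ) : ℂ) * φ x := by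
    intro x
    have hb := abs_le.mp (hbd x)
    rw [hfib x, hν, setIntegral_indicator measurableSet_Iio, setIntegral_const]
    have : Set.Ioc (-M) M ∩ Set.Iio (h x) = Set.Ioo (-M) (h x) := by
      ext y
      simp only [Set.mem_inter_iff, Set.mem_Ioc, Set.mem_Iio, Set.mem_Ioo]
      exact ⟨fun hy => ⟨hy.1.1, hy.2⟩, fun hy => ⟨⟨hy.1, le_trans hy.2.le hb.2⟩, hy.2⟩⟩
    rw [this, Real.volume_real_Ioo, max_eq_left (by linarith [hb.1]), Complex.real_smul]
    norm_num
  -- inner x-integral bound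
  have houter : ∀ y : ℝ, ‖∫ x, G (x, y) ∂μ‖ ≤ K := by
    intro y
    have hfx : (fun x => G (x, y)) = ({x | y < h x}).indicator φ := by
      funext x
      simp only [hG, hW, Set.indicator_apply, Set.mem_setOf_eq]
    have hUm : MeasurableSet {x | y < h x} := hmono.measurable measurableSet_Ioi
    rw [hfx, hμ, setIntegral_indicator hUm]
    exact upper_int hK (fun x h1 h2 => hint x d h1 h2 le_rfl)
      (fun s t hst hs => lt_of_lt_of_le hs (hmono hst))
  have hswap := integral_integral_swap (μ := μ) (ν := ν) (f := fun x y => G (x, y)) hGint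
  -- integrability of integrands on μ
  have hφint : Integrable φ μ := hφ.integrableOn_Ioc
  have hhφint : Integrable (fun t => (h t : ℂ) * φ t) μ := by
    refine hφint.bdd_mul (c := M) ?_ (Filter.Eventually.of_forall fun t => ?_)
    · exact (Complex.measurable_ofReal.comp hmono.measurable).aestronglyMeasurable
    · simpa using hbd t
  have key : ∫ t, (h t : ℂ) * φ t ∂μ
      = (∫ y, ∫ x, G (x, y) ∂μ ∂ν) - (M : ℂ) * ∫ t, φ t ∂μ := by
    rw [← hswap]
    have : ∫ x, ∫ y, G (x, y) ∂ν ∂μ = ∫ x, ((h x : ℂ) * φ x + (M : ℂ) * φ x) ∂μ := by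
      refine integral_congr_ae (Filter.Eventually.of_forall fun x => ?_)
      dsimp only
      rw [hinner x]; push_cast; ring
    rw [this, integral_add hhφint (hφint.const_mul _), integral_const_mul]
    ring
  have hφbound : ‖∫ t, φ t ∂μ‖ ≤ K := by
    rw [hμ, ← intervalIntegral.integral_of_le hcd]
    exact hint c d le_rfl hcd le_rfl
  have hybound : ‖∫ y, ∫ x, G (x, y) ∂μ ∂ν‖ ≤ K * (2 * M) := by
    have := norm_integral_le_of_norm_le_const (μ := ν)
      (f := fun y => ∫ x, G (x, y) ∂μ) (C := K) (Filter.Eventually.of_forall houter)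
    rwa [show ν.real Set.univ = 2 * M from hνuniv] at this
  rw [intervalIntegral.integral_of_le hcd, ← hμ, key]
  calc ‖(∫ y, ∫ x, G (x, y) ∂μ ∂ν) - (M : ℂ) * ∫ t, φ t ∂μ‖
      ≤ ‖∫ y, ∫ x, G (x, y) ∂μ ∂ν‖ + ‖(M : ℂ) * ∫ t, φ t ∂μ‖ := norm_sub_le _ _
    _ ≤ K * (2 * M) + M * K := by
        refine add_le_add hybound ?_
        rw [norm_mul, Complex.norm_real, Real.norm_eq_abs, abs_of_nonneg hM]
        exact mul_le_mul_of_nonneg_left hφbound hM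
    _ ≤ 3 * M * K := by nlinarith

lemma layer {a b M K : ℝ} (hab : a ≤ b) (hK : 0 ≤ K)
    {h : ℝ → ℝ} (hmono : MonotoneOn h (Set.Icc a b) ∨ AntitoneOn h (Set.Icc a b))
    (hbd : ∀ t ∈ Set.Icc a b, |h t| ≤ M)
    {φ : ℝ → ℂ} (hφ : ContinuousOn φ (Set.Icc a b))
    (hint : ∀ x y, a ≤ x → x ≤ y → y ≤ b → ‖∫ t in x..y, φ t‖ ≤ K) :
    ∀ c d, a ≤ c → c ≤ d → d ≤ b → ‖∫ t in c..d, (h t : ℂ) * φ t‖ ≤ 3 * M * K := by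
  intro c d hac hcd hdb
  have hM : 0 ≤ M := (abs_nonneg _).trans (hbd a ⟨le_rfl, hab⟩)
  set p : ℝ → ℝ := fun t => max a (min b t) with hp
  have hpmem : ∀ t, p t ∈ Set.Icc a b :=
    fun t => ⟨le_max_left _ _, max_le hab (min_le_left _ _)⟩
  have hpmono : Monotone p := fun s t hst => max_le_max le_rfl (min_le_min le_rfl hst)
  have hpeq : ∀ t ∈ Set.Icc a b, p t = t := fun t ht => by
    rw [hp]; simp [min_eq_right ht.2, max_eq_right ht.1]
  have hpcont : Continuous p := continuous_const.max (continuous_const.min continuous_id)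
  set ψ : ℝ → ℂ := fun t => φ (p t) with hψ
  have hψc : Continuous ψ := hφ.comp_continuous hpcont hpmem
  have hψeq : ∀ x y, a ≤ x → x ≤ y → y ≤ b → (∫ t in x..y, ψ t) = ∫ t in x..y, φ t := by
    intro x y hax hxy hyb
    refine intervalIntegral.integral_congr (fun t ht => ?_)
    rw [Set.uIcc_of_le hxy] at ht
    have htm : t ∈ Set.Icc a b := ⟨hax.trans ht.1, ht.2.trans hyb⟩
    simp only [hψ, hpeq t htm]
  have hint' : ∀ x y, c ≤ x → x ≤ y → y ≤ d → ‖∫ t in x..y, ψ t‖ ≤ K := by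
    intro x y h1 h2 h3
    rw [hψeq x y (hac.trans h1) h2 (h3.trans hdb)]
    exact hint x y (hac.trans h1) h2 (h3.trans hdb)
  have hsub : Set.uIcc c d ⊆ Set.Icc a b := by
    rw [Set.uIcc_of_le hcd]; exact fun t ht => ⟨hac.trans ht.1, ht.2.trans hdb⟩
  rcases hmono with hm | hm
  · have key := layer_core hcd hM hK (h := fun t => h (p t))
      (fun s t hst => hm (hpmem s) (hpmem t) (hpmono hst))
      (fun t => hbd _ (hpmem t)) hψc hint'
    have : (∫ t in c..d, ((h (p t) : ℂ)) * ψ t) = ∫ t in c..d, (h t : ℂ) * φ t := by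
      refine intervalIntegral.integral_congr (fun t ht => ?_)
      have htm := hsub ht
      simp only [hψ, hpeq t htm]
    rwa [this] at key
  · have key := layer_core hcd hM hK (h := fun t => -h (p t))
      (fun s t hst => neg_le_neg (hm (hpmem s) (hpmem t) (hpmono hst)))
      (fun t => by rw [abs_neg]; exact hbd _ (hpmem t)) hψc hint'
    have : (∫ t in c..d, ((-h (p t) : ℝ) : ℂ) * ψ t)
        = ∫ t in c..d, -((h t : ℂ) * φ t) := by
      refine intervalIntegral.integral_congr (fun t ht => ?_)
      have htm := hsub ht
      simp only [hψ, hpeq t htm]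
      push_cast
      ring
    rw [this, intervalIntegral.integral_neg, norm_neg] at key
    exact key
lemma ftc_base {a b : ℝ} {g g' : ℝ → ℝ}
    (hg : ∀ t ∈ Set.Icc a b, HasDerivAt g (g' t) t)
    (hg'c : ContinuousOn g' (Set.Icc a b)) :
    ∀ x y, a ≤ x → x ≤ y → y ≤ b →
      ‖∫ t in x..y, (g' t : ℂ) * Complex.exp (2 * Real.pi * Complex.I * g t)‖
        ≤ 1 / Real.pi := by
  intro x y hax hxy hyb
  set c : ℂ := 2 * Real.pi * Complex.I with hcdef
  have hc : c ≠ 0 := by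
    simp only [hcdef]
    refine mul_ne_zero (mul_ne_zero two_ne_zero ?_) Complex.I_ne_zero
    exact_mod_cast Real.pi_ne_zero
  have hsub : Set.uIcc x y ⊆ Set.Icc a b := by
    rw [Set.uIcc_of_le hxy]; exact fun t ht => ⟨hax.trans ht.1, ht.2.trans hyb⟩
  have hnorm : ∀ t : ℝ, ‖Complex.exp (c * g t)‖ = 1 := by
    intro t
    have : c * (g t : ℂ) = ((2 * Real.pi * g t : ℝ) : ℂ) * Complex.I := by
      rw [hcdef]; push_cast; ring
    rw [this, Complex.norm_exp_ofReal_mul_I]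
  have hder : ∀ t ∈ Set.uIcc x y,
      HasDerivAt (fun t => Complex.exp (c * g t) / c)
        ((g' t : ℂ) * Complex.exp (c * g t)) t := by
    intro t ht
    have h2 : HasDerivAt (fun t : ℝ => (g t : ℂ)) (g' t : ℂ) t := (hg t (hsub ht)).ofReal_comp
    have h4 := (h2.const_mul c).cexp
    have h5 := h4.div_const c
    refine h5.congr_deriv ?_
    rw [div_eq_iff hc]
    ring
  have hgcont : ContinuousOn g (Set.Icc a b) :=
    fun t ht => ((hg t ht).continuousAt).continuousWithinAt
  have hcont : IntervalIntegrable (fun t => (g' t : ℂ) * Complex.exp (c * g t)) volume x y := by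
    apply ContinuousOn.intervalIntegrable
    refine ContinuousOn.mul ?_ ?_
    · exact Complex.continuous_ofReal.comp_continuousOn (hg'c.mono hsub)
    · exact Complex.continuous_exp.comp_continuousOn
        (continuousOn_const.mul (Complex.continuous_ofReal.comp_continuousOn (hgcont.mono hsub)))
  have hFTC := intervalIntegral.integral_eq_sub_of_hasDerivAt hder hcont
  rw [hcdef] at hFTC ⊢
  rw [hFTC]
  have hnc : ‖(2 * (Real.pi:ℂ) * Complex.I)‖ = 2 * Real.pi := by
    simp [abs_of_nonneg Real.pi_nonneg]
  calc ‖Complex.exp (2*(Real.pi:ℂ)*Complex.I * g y) / (2*(Real.pi:ℂ)*Complex.I)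
        - Complex.exp (2*(Real.pi:ℂ)*Complex.I * g x) / (2*(Real.pi:ℂ)*Complex.I)‖
      ≤ ‖Complex.exp (2*(Real.pi:ℂ)*Complex.I * g y) / (2*(Real.pi:ℂ)*Complex.I)‖
        + ‖Complex.exp (2*(Real.pi:ℂ)*Complex.I * g x) / (2*(Real.pi:ℂ)*Complex.I)‖ :=
        norm_sub_le _ _
    _ = 1 / (2 * Real.pi) + 1 / (2 * Real.pi) := by
        rw [norm_div, norm_div, hnc, hnorm, hnorm]
    _ ≤ 1 / Real.pi := by
        rw [← add_div]
        rw [div_le_div_iff₀ (by positivity) Real.pi_pos]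
        ring_nf
        linarith [Real.pi_pos]

lemma inv_antitone_aux {p q : ℝ} (hpq : p ≤ q) (hpos : 0 < p * q) : q⁻¹ ≤ p⁻¹ := by
  have hp : p ≠ 0 := fun h => by simp [h] at hpos
  have hq : q ≠ 0 := fun h => by simp [h] at hpos
  have heq : p⁻¹ - q⁻¹ = (q - p) / (p * q) := by field_simp
  have := div_nonneg (sub_nonneg.2 hpq) hpos.le
  linarith [heq ▸ this]
lemma osc_base {a b Δ : ℝ} (hab : a ≤ b) {g g' : ℝ → ℝ}
    (hg : ∀ t ∈ Set.Icc a b, HasDerivAt g (g' t) t)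
    (hg'c : ContinuousOn g' (Set.Icc a b))
    (hg'mono : MonotoneOn g' (Set.Icc a b) ∨ AntitoneOn g' (Set.Icc a b))
    (hΔ : 0 < Δ) (hΔle : ∀ t ∈ Set.Icc a b, Δ ≤ |g' t|) :
    ∀ x y, a ≤ x → x ≤ y → y ≤ b →
      ‖∫ t in x..y, Complex.exp (2 * Real.pi * Complex.I * g t)‖
        ≤ 3 * Δ⁻¹ * (1 / Real.pi) := by
  have hne : ∀ t ∈ Set.Icc a b, g' t ≠ 0 := by
    intro t ht h0
    have := hΔle t ht
    rw [h0, abs_zero] at this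
    linarith
  have hsign : (∀ t ∈ Set.Icc a b, 0 < g' t) ∨ (∀ t ∈ Set.Icc a b, g' t < 0) := by
    by_contra hcon
    push_neg at hcon
    obtain ⟨⟨t₁, ht₁, h₁⟩, t₂, ht₂, h₂⟩ := hcon
    have h₁' : g' t₁ < 0 := lt_of_le_of_ne h₁ (hne t₁ ht₁)
    have h₂' : 0 < g' t₂ := lt_of_le_of_ne h₂ (Ne.symm (hne t₂ ht₂))
    have hsub : Set.uIcc t₁ t₂ ⊆ Set.Icc a b := Set.uIcc_subset_Icc ht₁ ht₂
    have hiv := intermediate_value_uIcc (hg'c.mono hsub)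
    have h0 : (0:ℝ) ∈ Set.uIcc (g' t₁) (g' t₂) := by
      rw [Set.mem_uIcc]; left; exact ⟨h₁'.le, h₂'.le⟩
    obtain ⟨z, hz, hz0⟩ := hiv h0
    exact hne z (hsub hz) hz0
  have hinvmono : MonotoneOn (fun t => (g' t)⁻¹) (Set.Icc a b) ∨
      AntitoneOn (fun t => (g' t)⁻¹) (Set.Icc a b) := by
    have hprod : ∀ s ∈ Set.Icc a b, ∀ t ∈ Set.Icc a b, 0 < g' s * g' t := by
      rcases hsign with hs | hs
      · exact fun s hsm t htm => mul_pos (hs s hsm) (hs t htm)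
      · exact fun s hsm t htm => mul_pos_of_neg_of_neg (hs s hsm) (hs t htm)
    rcases hg'mono with hm | hm
    · exact Or.inr (fun s hsm t htm hst =>
        inv_antitone_aux (hm hsm htm hst) (hprod s hsm t htm))
    · exact Or.inl (fun s hsm t htm hst =>
        inv_antitone_aux (hm hsm htm hst) (hprod t htm s hsm))
  have hinvbd : ∀ t ∈ Set.Icc a b, |(g' t)⁻¹| ≤ Δ⁻¹ := by
    intro t ht
    rw [abs_inv]
    exact inv_anti₀ hΔ (hΔle t ht)
  have hgcont : ContinuousOn g (Set.Icc a b) :=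
    fun t ht => ((hg t ht).continuousAt).continuousWithinAt
  have hφc : ContinuousOn (fun t => (g' t : ℂ) * Complex.exp (2 * Real.pi * Complex.I * g t))
      (Set.Icc a b) := by
    refine ContinuousOn.mul (Complex.continuous_ofReal.comp_continuousOn hg'c) ?_
    exact Complex.continuous_exp.comp_continuousOn
      (continuousOn_const.mul (Complex.continuous_ofReal.comp_continuousOn hgcont))
  intro x y h1 h2 h3
  have key := layer hab (by positivity) hinvmono hinvbd hφc (ftc_base hg hg'c) x y h1 h2 h3
  have heq : (∫ t in x..y, (((g' t)⁻¹ : ℝ) : ℂ) *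
        ((g' t : ℂ) * Complex.exp (2 * Real.pi * Complex.I * g t)))
      = ∫ t in x..y, Complex.exp (2 * Real.pi * Complex.I * g t) := by
    refine intervalIntegral.integral_congr (fun t ht => ?_)
    have htm : t ∈ Set.Icc a b := by
      rw [Set.uIcc_of_le h2] at ht
      exact ⟨h1.trans ht.1, ht.2.trans h3⟩
    have hne' : (g' t : ℂ) ≠ 0 := by exact_mod_cast hne t htm
    push_cast
    field_simp
  rwa [heq] at key

lemma prod_bound {k : ℕ} {a b : ℝ} (hab : a ≤ b) (f : Fin k → ℝ → ℝ) (A : Fin k → ℝ)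
    (E : ℝ → ℂ) (hEc : ContinuousOn E (Set.Icc a b)) (K₀ : ℝ) (hK₀ : 0 ≤ K₀)
    (hfc : ∀ j, ContinuousOn (f j) (Set.Icc a b))
    (hfm : ∀ j, MonotoneOn (f j) (Set.Icc a b) ∨ AntitoneOn (f j) (Set.Icc a b))
    (hfb : ∀ j, ∀ t ∈ Set.Icc a b, |f j t| ≤ A j)
    (hbase : ∀ x y, a ≤ x → x ≤ y → y ≤ b → ‖∫ t in x..y, E t‖ ≤ K₀) :
    ∀ (s : Finset (Fin k)), ∀ x y, a ≤ x → x ≤ y → y ≤ b →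
      ‖∫ t in x..y, ((∏ j ∈ s, f j t : ℝ) : ℂ) * E t‖
        ≤ 3 ^ s.card * (∏ j ∈ s, A j) * K₀ := by
  have hA : ∀ j, 0 ≤ A j := fun j => (abs_nonneg _).trans (hfb j a ⟨le_rfl, hab⟩)
  intro s
  induction s using Finset.induction_on with
  | empty =>
    intro x y h1 h2 h3
    simpa using hbase x y h1 h2 h3
  | @insert i s hi ih =>
    intro x y h1 h2 h3
    have hφc : ContinuousOn (fun t => ((∏ j ∈ s, f j t : ℝ) : ℂ) * E t) (Set.Icc a b) := by
      refine ContinuousOn.mul ?_ hEc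
      exact Complex.continuous_ofReal.comp_continuousOn
        (continuousOn_finset_prod s (fun j _ => hfc j))
    have hKnn : 0 ≤ 3 ^ s.card * (∏ j ∈ s, A j) * K₀ := by
      have : 0 ≤ ∏ j ∈ s, A j := Finset.prod_nonneg (fun j _ => hA j)
      positivity
    have key := layer hab hKnn (hfm i) (hfb i) hφc ih x y h1 h2 h3
    have heq : (∫ t in x..y, (f i t : ℂ) * (((∏ j ∈ s, f j t : ℝ) : ℂ) * E t))
        = ∫ t in x..y, ((∏ j ∈ insert i s, f j t : ℝ) : ℂ) * E t := by
      refine intervalIntegral.integral_congr (fun t _ => ?_)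
      rw [Finset.prod_insert hi]
      push_cast
      ring
    rw [heq] at key
    calc ‖∫ t in x..y, ((∏ j ∈ insert i s, f j t : ℝ) : ℂ) * E t‖
        ≤ 3 * A i * (3 ^ s.card * (∏ j ∈ s, A j) * K₀) := key
      _ = 3 ^ (insert i s).card * (∏ j ∈ insert i s, A j) * K₀ := by
          rw [Finset.card_insert_of_notMem hi, Finset.prod_insert hi, pow_succ]
          ring

theorem first_derivative_test (k : ℕ) (hk : 0 < k) :
    ∃ C > (0:ℝ), ∀ (a b : ℝ), a < b →
      ∀ (f : Fin k → ℝ → ℝ) (A : Fin k → ℝ) (g g' : ℝ → ℝ) (Δ : ℝ),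
      (∀ j, ContinuousOn (f j) (Set.Icc a b)) →
      (∀ j, MonotoneOn (f j) (Set.Icc a b) ∨ AntitoneOn (f j) (Set.Icc a b)) →
      (∀ j, ∀ t ∈ Set.Icc a b, |f j t| ≤ A j) →
      (∀ t ∈ Set.Icc a b, HasDerivAt g (g' t) t) →
      ContinuousOn g' (Set.Icc a b) →
      (MonotoneOn g' (Set.Icc a b) ∨ AntitoneOn g' (Set.Icc a b)) →
      0 < Δ → (∀ t ∈ Set.Icc a b, Δ ≤ |g' t|) →
      ‖∫ t in a..b, ((∏ j, f j t : ℝ) : ℂ) *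
          Complex.exp (2 * Real.pi * Complex.I * g t)‖
        ≤ C * (∏ j, A j) / Δ := by
  refine ⟨3 ^ (k + 1) / Real.pi, by positivity, ?_⟩
  intro a b hab f A g g' Δ hfc hfm hfb hg hg'c hg'm hΔ hΔle
  have hab' : a ≤ b := hab.le
  have hbase := osc_base hab' hg hg'c hg'm hΔ hΔle
  have hgcont : ContinuousOn g (Set.Icc a b) :=
    fun t ht => ((hg t ht).continuousAt).continuousWithinAt
  have hEc : ContinuousOn (fun t => Complex.exp (2 * Real.pi * Complex.I * g t))
      (Set.Icc a b) :=
    Complex.continuous_exp.comp_continuousOn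
      (continuousOn_const.mul (Complex.continuous_ofReal.comp_continuousOn hgcont))
  have hmain := prod_bound hab' f A _ hEc (3 * Δ⁻¹ * (1 / Real.pi)) (by positivity)
    hfc hfm hfb hbase Finset.univ a b le_rfl hab' le_rfl
  have hP : 0 ≤ ∏ j, A j :=
    Finset.prod_nonneg (fun j _ => (abs_nonneg _).trans (hfb j a ⟨le_rfl, hab'⟩))
  calc ‖∫ t in a..b, ((∏ j, f j t : ℝ) : ℂ) * Complex.exp (2 * Real.pi * Complex.I * g t)‖
      ≤ 3 ^ k * (∏ j, A j) * (3 * Δ⁻¹ * (1 / Real.pi)) := by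
        simpa [Finset.card_univ] using hmain
    _ = 3 ^ (k + 1) / Real.pi * (∏ j, A j) / Δ := by
        field_simp
        ring
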